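/- Let F : Nil → Nil be a functor on the category of nilpotent groups of class two which preserves finite coproducts and satisfies F(0) = 0. Then F is quadratic, i.e., the second cross-effect F(X|Y) = Ker(F(X ∨ Y) → F(X) × F(Y)) is linear (additive) in each variable X and Y. -/

import Mathlib

open CategoryTheory Limits
open scoped commutatorElement

/-- The category of groups of nilpotence class two. -/
abbrev NilCat : Type _ :=
  CategoryTheory.ObjectProperty.FullSubcategory (fun G : GrpCat => ∀ x y z : G, ⁅⁅x, y⁆, z⁆ = 1)

/-- The trivial nil₂-group. -/
def NilCat.triv : NilCat :=
  ⟨GrpCat.of PUnit, fun _ _ _ => Subsingleton.elim _ _⟩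

/-- Application of a morphism of `NilCat`. -/
def NilCat.app {X Y : NilCat} (f : X ⟶ Y) (g : X.obj) : Y.obj :=
  f.hom.hom g

/-- The trivial morphism between two objects of `NilCat`. -/
def NilCat.zeroHom (X Y : NilCat) : X ⟶ Y :=
  ObjectProperty.homMk (GrpCat.ofHom (1 : X.obj →* Y.obj))

variable [HasBinaryCoproducts NilCat]

/-- The retraction `X ∨ Y → X` of the coproduct onto its first factor. -/
noncomputable def NilCat.retr₁ (X Y : NilCat) : (X ⨿ Y) ⟶ X :=
  coprod.desc (𝟙 X) (NilCat.zeroHom Y X)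

/-- The retraction `X ∨ Y → Y` of the coproduct onto its second factor. -/
noncomputable def NilCat.retr₂ (X Y : NilCat) : (X ⨿ Y) ⟶ Y :=
  coprod.desc (NilCat.zeroHom X Y) (𝟙 Y)

/-- The second cross-effect `F(X|Y)`: the kernel of `F(X ∨ Y) → F(X) × F(Y)`. -/
noncomputable def crossEffectSet (F : NilCat ⥤ NilCat) (X Y : NilCat) :
    Set ((F.obj (X ⨿ Y)).obj) :=
  {g | NilCat.app (F.map (NilCat.retr₁ X Y)) g = 1 ∧
       NilCat.app (F.map (NilCat.retr₂ X Y)) g = 1}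

/-! ### Auxiliary group-theoretic lemmas -/

set_option linter.unusedSectionVars false

section GroupCore
variable {G : Type*} [Group G]

lemma nil2.comm_central (h2 : ∀ x y z : G, ⁅⁅x,y⁆,z⁆ = 1) (x y z : G) :
    Commute ⁅x, y⁆ z :=
  commutatorElement_eq_one_iff_commute.mp (h2 x y z)

lemma nil2.comm_mul_left (h2 : ∀ x y z : G, ⁅⁅x,y⁆,z⁆ = 1) (a b c : G) :
    ⁅a * b, c⁆ = ⁅a, c⁆ * ⁅b, c⁆ := by
  have e : ⁅a * b, c⁆ = a * ⁅b, c⁆ * a⁻¹ * ⁅a, c⁆ := by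
    simp only [commutatorElement_def]; group
  have h := (nil2.comm_central h2 b c a).symm.eq
  rw [e, h, mul_assoc ⁅b,c⁆ a a⁻¹, mul_inv_cancel, mul_one]
  exact (nil2.comm_central h2 b c ⁅a,c⁆).eq

lemma nil2.comm_inv_left (h2 : ∀ x y z : G, ⁅⁅x,y⁆,z⁆ = 1) (a b : G) :
    ⁅a⁻¹, b⁆ = ⁅a, b⁆⁻¹ := by
  have := nil2.comm_mul_left h2 a a⁻¹ b
  rw [mul_inv_cancel, commutatorElement_one_left] at this
  exact (inv_eq_of_mul_eq_one_right this.symm).symm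

/-- The kernel of the canonical map to the product is contained in the
subgroup generated by cross-commutators. -/
lemma kernel_structure {G A B : Type*} [Group G] [Group A] [Group B]
    (h2 : ∀ x y z : G, ⁅⁅x,y⁆,z⁆ = 1)
    (ι₁ : A →* G) (ι₂ : B →* G) (r₁ : G →* A) (r₂ : G →* B)
    (h11 : ∀ a, r₁ (ι₁ a) = a) (h22 : ∀ b, r₂ (ι₂ b) = b)
    (h12 : ∀ b, r₁ (ι₂ b) = 1) (h21 : ∀ a, r₂ (ι₁ a) = 1)
    (hgen : Subgroup.closure (Set.range ι₁ ∪ Set.range ι₂) = ⊤)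
    {g : G} (hg1 : r₁ g = 1) (hg2 : r₂ g = 1) :
    g ∈ Subgroup.closure {x | ∃ a b, x = ⁅ι₁ a, ι₂ b⁆} := by
  set Z := Subgroup.closure {x : G | ∃ a b, x = ⁅ι₁ a, ι₂ b⁆} with hZ
  have hZc : ∀ z ∈ Z, ∀ g : G, g * z = z * g := by
    intro z hz
    rw [hZ] at hz
    refine Subgroup.closure_induction ?_ (by simp) ?_ ?_ hz
    · rintro x ⟨a, b, rfl⟩ g
      exact ((nil2.comm_central h2 (ι₁ a) (ι₂ b) g).symm).eq
    · intro x y _ _ hx hy g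
      rw [← mul_assoc, hx, mul_assoc, hy, mul_assoc]
    · intro x _ hx g
      exact (Commute.inv_right (hx g : Commute g x)).eq
  haveI : Z.Normal := by
    constructor
    intro n hn g
    have e : g * n * g⁻¹ = n := by
      rw [hZc n hn g, mul_assoc, mul_inv_cancel, mul_one]
    rwa [e]
  have hcomm : ∀ (a : A) (b : B), Commute ((QuotientGroup.mk' Z).comp ι₁ a)
      ((QuotientGroup.mk' Z).comp ι₂ b) := by
    intro a b
    rw [← commutatorElement_eq_one_iff_commute]
    show ⁅(QuotientGroup.mk' Z) (ι₁ a), (QuotientGroup.mk' Z) (ι₂ b)⁆ = 1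
    rw [← map_commutatorElement]
    exact (QuotientGroup.eq_one_iff _).mpr (Subgroup.subset_closure ⟨a, b, rfl⟩)
  set s := MonoidHom.noncommCoprod ((QuotientGroup.mk' Z).comp ι₁)
      ((QuotientGroup.mk' Z).comp ι₂) hcomm
  have key : s.comp (r₁.prod r₂) = QuotientGroup.mk' Z := by
    apply MonoidHom.eq_of_eqOn_dense hgen
    rintro x (⟨a, rfl⟩ | ⟨b, rfl⟩)
    · show s (r₁ (ι₁ a), r₂ (ι₁ a)) = _
      rw [h11, h21]
      show (QuotientGroup.mk' Z) (ι₁ a) * (QuotientGroup.mk' Z) (ι₂ 1) = _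
      simp
    · show s (r₁ (ι₂ b), r₂ (ι₂ b)) = _
      rw [h12, h22]
      show (QuotientGroup.mk' Z) (ι₁ 1) * (QuotientGroup.mk' Z) (ι₂ b) = _
      simp
  have : (QuotientGroup.mk' Z) g = 1 := by
    rw [← key]
    show s (r₁ g, r₂ g) = 1
    rw [hg1, hg2]
    exact map_one s
  exact (QuotientGroup.eq_one_iff _).mp this
end GroupCore

section Master
open Subgroup Pointwise

lemma normal_of_le_center' {G : Type*} [Group G] (H : Subgroup G)
    (h : H ≤ Subgroup.center G) : H.Normal := by
  constructor
  intro n hn g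
  have e : g * n * g⁻¹ = n := by
    rw [(Subgroup.mem_center_iff.mp (h hn) g), mul_assoc, mul_inv_cancel, mul_one]
  rwa [e]

lemma kill_closure {H K A B : Type*} [Group H] [Group K] [Group A] [Group B]
    (ψ : H →* K) (u : A →* H) (v : B →* H)
    (h : ∀ a b, ψ ⁅u a, v b⁆ = 1) :
    ∀ x ∈ Subgroup.closure {x | ∃ a b, x = ⁅u a, v b⁆}, ψ x = 1 := by
  have : Subgroup.closure {x | ∃ a b, x = ⁅u a, v b⁆} ≤ ψ.ker := by
    rw [Subgroup.closure_le]
    rintro x ⟨a, b, rfl⟩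
    exact h a b
  exact fun x hx => this hx

lemma master_bij
    {G G₁ G₂ A B A₁ A₂ : Type*} [Group G] [Group G₁] [Group G₂] [Group A]
    [Group B] [Group A₁] [Group A₂]
    (h2 : ∀ x y z : G, ⁅⁅x,y⁆,z⁆ = 1)
    (h2₁ : ∀ x y z : G₁, ⁅⁅x,y⁆,z⁆ = 1) (h2₂ : ∀ x y z : G₂, ⁅⁅x,y⁆,z⁆ = 1)
    (ι₁ : A →* G) (ι₂ : B →* G) (r₁ : G →* A) (r₂ : G →* B)
    (j₁ : A₁ →* A) (j₂ : A₂ →* A) (p₁ : A →* A₁) (p₂ : A →* A₂)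
    (ι₁' : A₁ →* G₁) (ι₂' : B →* G₁) (r₁' : G₁ →* A₁) (r₂' : G₁ →* B)
    (ι₁'' : A₂ →* G₂) (ι₂'' : B →* G₂) (r₁'' : G₂ →* A₂) (r₂'' : G₂ →* B)
    (m₁ : G →* G₁) (m₂ : G →* G₂) (κ₁ : G₁ →* G) (κ₂ : G₂ →* G)
    (hr11 : ∀ a, r₁ (ι₁ a) = a) (hr22 : ∀ b, r₂ (ι₂ b) = b)
    (hr12 : ∀ b, r₁ (ι₂ b) = 1) (hr21 : ∀ a, r₂ (ι₁ a) = 1)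
    (hr11' : ∀ a, r₁' (ι₁' a) = a) (hr22' : ∀ b, r₂' (ι₂' b) = b)
    (hr12' : ∀ b, r₁' (ι₂' b) = 1) (hr21' : ∀ a, r₂' (ι₁' a) = 1)
    (hr11'' : ∀ a, r₁'' (ι₁'' a) = a) (hr22'' : ∀ b, r₂'' (ι₂'' b) = b)
    (hr12'' : ∀ b, r₁'' (ι₂'' b) = 1) (hr21'' : ∀ a, r₂'' (ι₁'' a) = 1)
    (hp11 : ∀ u, p₁ (j₁ u) = u) (hp22 : ∀ v, p₂ (j₂ v) = v)
    (hp12 : ∀ v, p₁ (j₂ v) = 1) (hp21 : ∀ u, p₂ (j₁ u) = 1)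
    (hgenG : closure (Set.range ι₁ ∪ Set.range ι₂) = ⊤)
    (hgenA : closure (Set.range j₁ ∪ Set.range j₂) = ⊤)
    (hgen₁ : closure (Set.range ι₁' ∪ Set.range ι₂') = ⊤)
    (hgen₂ : closure (Set.range ι₁'' ∪ Set.range ι₂'') = ⊤)
    (w1 : ∀ g, r₁' (m₁ g) = p₁ (r₁ g)) (w2 : ∀ g, r₂' (m₁ g) = r₂ g)
    (w3 : ∀ g, r₁'' (m₂ g) = p₂ (r₁ g)) (w4 : ∀ g, r₂'' (m₂ g) = r₂ g)
    (s1 : ∀ x, m₁ (κ₁ x) = x) (s2 : ∀ x, m₂ (κ₂ x) = x)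
    (s3 : ∀ x, r₁ (κ₁ x) = j₁ (r₁' x)) (s4 : ∀ x, r₂ (κ₁ x) = r₂' x)
    (s5 : ∀ x, r₁ (κ₂ x) = j₂ (r₁'' x)) (s6 : ∀ x, r₂ (κ₂ x) = r₂'' x)
    (e1 : ∀ a, m₁ (ι₁ a) = ι₁' (p₁ a)) (e2 : ∀ b, m₁ (ι₂ b) = ι₂' b)
    (e3 : ∀ a, m₂ (ι₁ a) = ι₁'' (p₂ a)) (e4 : ∀ b, m₂ (ι₂ b) = ι₂'' b)
    (d1 : ∀ u, κ₁ (ι₁' u) = ι₁ (j₁ u)) (d2 : ∀ b, κ₁ (ι₂' b) = ι₂ b)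
    (d3 : ∀ v, κ₂ (ι₁'' v) = ι₁ (j₂ v)) (d4 : ∀ b, κ₂ (ι₂'' b) = ι₂ b) :
    Set.BijOn (fun g => (m₁ g, m₂ g))
      {g | r₁ g = 1 ∧ r₂ g = 1}
      (({x | r₁' x = 1 ∧ r₂' x = 1} : Set G₁) ×ˢ ({x | r₁'' x = 1 ∧ r₂'' x = 1} : Set G₂)) := by
  have c1 : ∀ a, m₂ (κ₁ (ι₁' a)) = 1 := fun a => by
    rw [d1, e3, hp21, map_one]
  have c2 : ∀ b, m₂ (κ₁ (ι₂' b)) = ι₂'' b := fun b => by rw [d2, e4]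
  have c3 : ∀ a, m₁ (κ₂ (ι₁'' a)) = 1 := fun a => by
    rw [d3, e1, hp12, map_one]
  have c4 : ∀ b, m₁ (κ₂ (ι₂'' b)) = ι₂' b := fun b => by rw [d4, e2]
  have w1' : ∀ g, r₁ g = 1 → r₁' (m₁ g) = 1 := fun g hg => by
    rw [w1, hg, map_one]
  have w3' : ∀ g, r₁ g = 1 → r₁'' (m₂ g) = 1 := fun g hg => by
    rw [w3, hg, map_one]
  have s3' : ∀ x, r₁' x = 1 → r₁ (κ₁ x) = 1 := fun x hx => by
    rw [s3, hx, map_one]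
  have s5' : ∀ x, r₁'' x = 1 → r₁ (κ₂ x) = 1 := fun x hx => by
    rw [s5, hx, map_one]
  have kill13 : ∀ x ∈ Subgroup.closure {x : G₂ | ∃ a b, x = ⁅ι₁'' a, ι₂'' b⁆},
      m₁ (κ₂ x) = 1 := by
    intro x hx
    refine kill_closure (m₁.comp κ₂) ι₁'' ι₂'' ?_ x hx
    intro a b
    show m₁ (κ₂ ⁅ι₁'' a, ι₂'' b⁆) = 1
    rw [map_commutatorElement, map_commutatorElement]
    show ⁅m₁ (κ₂ (ι₁'' a)), m₁ (κ₂ (ι₂'' b))⁆ = 1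
    rw [c3, c4, commutatorElement_one_left]
  have kill21 : ∀ x ∈ Subgroup.closure {x : G₁ | ∃ a b, x = ⁅ι₁' a, ι₂' b⁆},
      m₂ (κ₁ x) = 1 := by
    intro x hx
    refine kill_closure (m₂.comp κ₁) ι₁' ι₂' ?_ x hx
    intro a b
    show m₂ (κ₁ ⁅ι₁' a, ι₂' b⁆) = 1
    rw [map_commutatorElement, map_commutatorElement]
    show ⁅m₂ (κ₁ (ι₁' a)), m₂ (κ₁ (ι₂' b))⁆ = 1
    rw [c1, c2, commutatorElement_one_left]
  refine ⟨?_, ?_, ?_⟩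
  · rintro g ⟨hg1, hg2⟩
    exact ⟨⟨w1' g hg1, by rw [w2]; exact hg2⟩, ⟨w3' g hg1, by rw [w4]; exact hg2⟩⟩
  · rintro g ⟨hg1, hg2⟩ g' ⟨hg1', hg2'⟩ heq
    have heq1 : m₁ g = m₁ g' := congrArg Prod.fst heq
    have heq2 : m₂ g = m₂ g' := congrArg Prod.snd heq
    set h := g⁻¹ * g' with hh
    have hKh1 : r₁ h = 1 := by rw [hh, map_mul, map_inv, hg1, hg1']; simp
    have hKh2 : r₂ h = 1 := by rw [hh, map_mul, map_inv, hg2, hg2']; simp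
    have hm1 : m₁ h = 1 := by rw [hh, map_mul, map_inv, heq1]; simp
    have hm2 : m₂ h = 1 := by rw [hh, map_mul, map_inv, heq2]; simp
    have hstruct := kernel_structure h2 ι₁ ι₂ r₁ r₂ hr11 hr22 hr12 hr21 hgenG hKh1 hKh2
    set C₁ := Subgroup.closure {x : G₁ | ∃ a b, x = ⁅ι₁' a, ι₂' b⁆} with hC₁
    set C₂ := Subgroup.closure {x : G₂ | ∃ a b, x = ⁅ι₁'' a, ι₂'' b⁆} with hC₂
    set Z₁ := C₁.map κ₁ with hZ₁
    set Z₂ := C₂.map κ₂ with hZ₂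
    have hZ₂c : Z₂ ≤ Subgroup.center G := by
      rw [hZ₂, hC₂, MonoidHom.map_closure, Subgroup.closure_le]
      rintro x ⟨y, ⟨a, b, rfl⟩, rfl⟩
      simp only [SetLike.mem_coe]
      rw [map_commutatorElement]
      exact Subgroup.mem_center_iff.mpr fun g =>
        ((nil2.comm_central h2 _ _ g).symm).eq
    haveI : Z₂.Normal := normal_of_le_center' _ hZ₂c
    have hsub : Subgroup.closure {x : G | ∃ a b, x = ⁅ι₁ a, ι₂ b⁆} ≤ Z₁ ⊔ Z₂ := by
      rw [Subgroup.closure_le]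
      rintro x ⟨a, b, rfl⟩
      simp only [SetLike.mem_coe]
      let T : Subgroup A :=
        { carrier := {a : A | ⁅ι₁ a, ι₂ b⁆ ∈ Z₁ ⊔ Z₂}
          one_mem' := by
            simp only [Set.mem_setOf_eq, map_one, commutatorElement_one_left]
            exact Subgroup.one_mem _
          mul_mem' := by
            intro p q hp hq
            simp only [Set.mem_setOf_eq, map_mul] at *
            rw [nil2.comm_mul_left h2]
            exact Subgroup.mul_mem _ hp hq
          inv_mem' := by
            intro p hp
            simp only [Set.mem_setOf_eq, map_inv] at *
            rw [nil2.comm_inv_left h2]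
            exact Subgroup.inv_mem _ hp }
      have hT : (⊤ : Subgroup A) ≤ T := by
        rw [← hgenA, Subgroup.closure_le]
        rintro y (⟨u, rfl⟩ | ⟨v, rfl⟩)
        · show ⁅ι₁ (j₁ u), ι₂ b⁆ ∈ Z₁ ⊔ Z₂
          rw [← d1, ← d2, ← map_commutatorElement]
          exact Subgroup.mem_sup_left
            (Subgroup.mem_map_of_mem κ₁ (Subgroup.subset_closure ⟨u, b, rfl⟩))
        · show ⁅ι₁ (j₂ v), ι₂ b⁆ ∈ Z₁ ⊔ Z₂
          rw [← d3, ← d4, ← map_commutatorElement]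
          exact Subgroup.mem_sup_right
            (Subgroup.mem_map_of_mem κ₂ (Subgroup.subset_closure ⟨v, b, rfl⟩))
      exact hT (Subgroup.mem_top a)
    have hmem : h ∈ ((Z₁ : Set G) * (Z₂ : Set G)) := by
      rw [← Subgroup.mul_normal Z₁ Z₂]
      exact hsub hstruct
    obtain ⟨α, hα, β, hβ, hαβ⟩ := hmem
    obtain ⟨α', hα', rfl⟩ := hα
    obtain ⟨β', hβ', rfl⟩ := hβ
    have hα1 : α' = 1 := by
      have : m₁ h = α' * m₁ (κ₂ β') := by
        rw [← hαβ, map_mul, s1]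
      rw [kill13 β' hβ', mul_one] at this
      rw [← this, hm1]
    have hβ1 : β' = 1 := by
      have : m₂ h = m₂ (κ₁ α') * β' := by
        rw [← hαβ, map_mul, s2]
      rw [kill21 α' hα', one_mul] at this
      rw [← this, hm2]
    have hh1 : h = 1 := by rw [← hαβ, hα1, hβ1]; simp
    have := hh1
    rw [hh] at this
    exact (inv_mul_eq_one.mp this)
  · rintro ⟨k₁, k₂⟩ ⟨⟨hk11, hk12⟩, ⟨hk21, hk22⟩⟩
    have hk1C : k₁ ∈ Subgroup.closure {x : G₁ | ∃ a b, x = ⁅ι₁' a, ι₂' b⁆} :=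
      kernel_structure h2₁ ι₁' ι₂' r₁' r₂' hr11' hr22' hr12' hr21' hgen₁ hk11 hk12
    have hk2C : k₂ ∈ Subgroup.closure {x : G₂ | ∃ a b, x = ⁅ι₁'' a, ι₂'' b⁆} :=
      kernel_structure h2₂ ι₁'' ι₂'' r₁'' r₂'' hr11'' hr22'' hr12'' hr21'' hgen₂ hk21 hk22
    refine ⟨κ₁ k₁ * κ₂ k₂, ⟨?_, ?_⟩, ?_⟩
    · rw [map_mul, s3' k₁ hk11, s5' k₂ hk21, one_mul]
    · rw [map_mul, s4, s6, hk12, hk22, one_mul]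
    · show (m₁ (κ₁ k₁ * κ₂ k₂), m₂ (κ₁ k₁ * κ₂ k₂)) = (k₁, k₂)
      rw [map_mul, map_mul, s1, s2, kill13 k₂ hk2C, kill21 k₁ hk1C, mul_one, one_mul]
end Master

/-! ### Categorical lemmas for `NilCat` -/

universe u v

namespace NilCat

lemma mhom_ext {X Y : NilCat.{u}} {f g : X ⟶ Y}
    (h : ∀ x, NilCat.app f x = NilCat.app g x) : f = g :=
  ObjectProperty.hom_ext _ (GrpCat.hom_ext (MonoidHom.ext h))

lemma app_one {X Y : NilCat.{u}} (f : X ⟶ Y) : NilCat.app f (1 : X.obj) = 1 :=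
  map_one f.hom.hom

lemma zero_comp {X Y Z : NilCat.{u}} (f : Y ⟶ Z) :
    NilCat.zeroHom X Y ≫ f = NilCat.zeroHom X Z := by
  apply mhom_ext; intro x
  show NilCat.app f (NilCat.app (NilCat.zeroHom X Y) x) = 1
  show NilCat.app f 1 = 1
  exact app_one f

lemma comp_zero {X Y Z : NilCat.{u}} (f : X ⟶ Y) :
    f ≫ NilCat.zeroHom Y Z = NilCat.zeroHom X Z := rfl

lemma inl_retr₁ (X Y : NilCat.{u}) : coprod.inl ≫ NilCat.retr₁ X Y = 𝟙 X :=
  coprod.inl_desc _ _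
lemma inr_retr₁ (X Y : NilCat.{u}) :
    coprod.inr ≫ NilCat.retr₁ X Y = NilCat.zeroHom Y X :=
  coprod.inr_desc _ _
lemma inl_retr₂ (X Y : NilCat.{u}) :
    coprod.inl ≫ NilCat.retr₂ X Y = NilCat.zeroHom X Y :=
  coprod.inl_desc _ _
lemma inr_retr₂ (X Y : NilCat.{u}) : coprod.inr ≫ NilCat.retr₂ X Y = 𝟙 Y :=
  coprod.inr_desc _ _

lemma mapl_retr₁ {A A' B : NilCat.{u}} (f : A ⟶ A') :
    coprod.map f (𝟙 B) ≫ NilCat.retr₁ A' B = NilCat.retr₁ A B ≫ f := by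
  rw [NilCat.retr₁, NilCat.retr₁, coprod.map_desc, coprod.desc_comp]
  rw [Category.comp_id, Category.id_comp, Category.id_comp, zero_comp]

lemma mapl_retr₂ {A A' B : NilCat.{u}} (f : A ⟶ A') :
    coprod.map f (𝟙 B) ≫ NilCat.retr₂ A' B = NilCat.retr₂ A B := by
  rw [NilCat.retr₂, NilCat.retr₂, coprod.map_desc, Category.id_comp, comp_zero]

lemma mapr_retr₂ {A B B' : NilCat.{u}} (g : B ⟶ B') :
    coprod.map (𝟙 A) g ≫ NilCat.retr₂ A B' = NilCat.retr₂ A B ≫ g := by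
  rw [NilCat.retr₂, NilCat.retr₂, coprod.map_desc, coprod.desc_comp]
  rw [Category.comp_id, Category.id_comp, Category.id_comp, zero_comp]

lemma mapr_retr₁ {A B B' : NilCat.{u}} (g : B ⟶ B') :
    coprod.map (𝟙 A) g ≫ NilCat.retr₁ A B' = NilCat.retr₁ A B := by
  rw [NilCat.retr₁, NilCat.retr₁, coprod.map_desc, Category.id_comp, comp_zero]

/-- A morphism of `NilCat`, seen as a `MonoidHom`. -/
def mh {X Y : NilCat.{u}} (f : X ⟶ Y) : X.obj →* Y.obj := f.hom.hom

end NilCat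

section FLemmas
variable (F : NilCat.{u} ⥤ NilCat.{v})

lemma appF_comp {X Y Z : NilCat.{u}} (f : X ⟶ Y) (g : Y ⟶ Z) (x : (F.obj X).obj) :
    NilCat.app (F.map (f ≫ g)) x = NilCat.app (F.map g) (NilCat.app (F.map f) x) := by
  rw [F.map_comp]; rfl

lemma appF_id {X : NilCat.{u}} (x : (F.obj X).obj) :
    NilCat.app (F.map (𝟙 X)) x = x := by rw [F.map_id]; rfl

lemma appF_zero (hF0 : Subsingleton (F.obj NilCat.triv).obj) (X Y : NilCat.{u})
    (x : (F.obj X).obj) :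
    NilCat.app (F.map (NilCat.zeroHom X Y)) x = 1 := by
  have hfac : NilCat.zeroHom X Y =
      NilCat.zeroHom X NilCat.triv ≫ NilCat.zeroHom NilCat.triv Y := by
    apply NilCat.mhom_ext; intro a; rfl
  rw [hfac, appF_comp]
  have h1 : NilCat.app (F.map (NilCat.zeroHom X NilCat.triv)) x
      = (1 : (F.obj NilCat.triv).obj) := hF0.elim _ _
  rw [h1]
  exact NilCat.app_one _

/-- pointwise version of a factorization through an identity -/
lemma pwF_id {X Y : NilCat.{u}} {f : X ⟶ Y} {g : Y ⟶ X} (h : f ≫ g = 𝟙 X)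
    (x : (F.obj X).obj) :
    NilCat.app (F.map g) (NilCat.app (F.map f) x) = x := by
  rw [← appF_comp, h, appF_id]

lemma pwF_zero (hF0 : Subsingleton (F.obj NilCat.triv).obj)
    {X Y Z : NilCat.{u}} {f : X ⟶ Y} {g : Y ⟶ Z} (h : f ≫ g = NilCat.zeroHom X Z)
    (x : (F.obj X).obj) :
    NilCat.app (F.map g) (NilCat.app (F.map f) x) = 1 := by
  rw [← appF_comp, h, appF_zero F hF0]

lemma pwF_eq {X Y Z : NilCat.{u}} {f : X ⟶ Y} {g : Y ⟶ Z} {w : X ⟶ Z}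
    (h : f ≫ g = w) (x : (F.obj X).obj) :
    NilCat.app (F.map g) (NilCat.app (F.map f) x) = NilCat.app (F.map w) x := by
  rw [← appF_comp, h]

lemma pwF_eq2 {X Y Y' Z : NilCat.{u}} {f : X ⟶ Y} {g : Y ⟶ Z} {f' : X ⟶ Y'} {g' : Y' ⟶ Z}
    (h : f ≫ g = f' ≫ g') (x : (F.obj X).obj) :
    NilCat.app (F.map g) (NilCat.app (F.map f) x)
      = NilCat.app (F.map g') (NilCat.app (F.map f') x) := by
  rw [← appF_comp, h, appF_comp]

noncomputable def genL (X Y : NilCat.{u}) :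
    Subgroup ((F.obj (X ⨿ Y)).obj) :=
  Subgroup.closure
    (Set.range (NilCat.app (F.map (coprod.inl : X ⟶ X ⨿ Y)))
      ∪ Set.range (NilCat.app (F.map (coprod.inr : Y ⟶ X ⨿ Y))))

noncomputable def genH (X Y : NilCat.{u}) : NilCat.{v} :=
  ⟨GrpCat.of (genL F X Y), by
    intro x y z
    have hamb := (F.obj (X ⨿ Y)).property x.val y.val z.val
    apply Subtype.ext
    simpa [commutatorElement_def] using hamb⟩

noncomputable def genf₁ (X Y : NilCat.{u}) : F.obj X ⟶ genH F X Y :=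
  ObjectProperty.homMk (GrpCat.ofHom
    (MonoidHom.codRestrict (F.map coprod.inl).hom.hom
      (genL F X Y) (fun x => Subgroup.subset_closure (Or.inl ⟨x, rfl⟩))))

noncomputable def genf₂ (X Y : NilCat.{u}) : F.obj Y ⟶ genH F X Y :=
  ObjectProperty.homMk (GrpCat.ofHom
    (MonoidHom.codRestrict (F.map coprod.inr).hom.hom
      (genL F X Y) (fun y => Subgroup.subset_closure (Or.inr ⟨y, rfl⟩))))

noncomputable def gensub (X Y : NilCat.{u}) : genH F X Y ⟶ F.obj (X ⨿ Y) :=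
  ObjectProperty.homMk (GrpCat.ofHom (genL F X Y).subtype)

lemma genf₁_sub (X Y : NilCat.{u}) :
    genf₁ F X Y ≫ gensub F X Y = F.map coprod.inl := by
  apply NilCat.mhom_ext; intro x; rfl

lemma genf₂_sub (X Y : NilCat.{u}) :
    genf₂ F X Y ≫ gensub F X Y = F.map coprod.inr := by
  apply NilCat.mhom_ext; intro x; rfl

lemma gen_top [PreservesFiniteCoproducts F] (X Y : NilCat.{u}) :
    Subgroup.closure
      (Set.range (NilCat.app (F.map (coprod.inl : X ⟶ X ⨿ Y)))
        ∪ Set.range (NilCat.app (F.map (coprod.inr : Y ⟶ X ⨿ Y)))) = ⊤ := by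
  rw [eq_top_iff]
  intro g _
  have hc : IsColimit (BinaryCofan.mk (F.map (coprod.inl : X ⟶ X ⨿ Y))
      (F.map (coprod.inr : Y ⟶ X ⨿ Y))) :=
    isColimitOfHasBinaryCoproductOfPreservesColimit F X Y
  set d : F.obj (X ⨿ Y) ⟶ genH F X Y := hc.desc (BinaryCofan.mk (genf₁ F X Y) (genf₂ F X Y)) with hd
  have hfacl : F.map (coprod.inl : X ⟶ X ⨿ Y) ≫ d = genf₁ F X Y := by
    have := hc.fac (BinaryCofan.mk (genf₁ F X Y) (genf₂ F X Y)) ⟨WalkingPair.left⟩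
    simp at this
    exact this
  have hfacr : F.map (coprod.inr : Y ⟶ X ⨿ Y) ≫ d = genf₂ F X Y := by
    have := hc.fac (BinaryCofan.mk (genf₁ F X Y) (genf₂ F X Y)) ⟨WalkingPair.right⟩
    simp at this
    exact this
  have claim : d ≫ gensub F X Y = 𝟙 (F.obj (X ⨿ Y)) := by
    apply hc.hom_ext
    rintro ⟨(_ | _)⟩
    · show F.map coprod.inl ≫ d ≫ gensub F X Y = F.map coprod.inl ≫ 𝟙 _
      rw [Category.comp_id, ← Category.assoc, hfacl, genf₁_sub]
    · show F.map coprod.inr ≫ d ≫ gensub F X Y = F.map coprod.inr ≫ 𝟙 _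
      rw [Category.comp_id, ← Category.assoc, hfacr, genf₂_sub]
  have hg : NilCat.app (gensub F X Y) (NilCat.app d g) = g := by
    show NilCat.app (d ≫ gensub F X Y) g = g
    rw [claim]; rfl
  rw [← hg]
  exact (NilCat.app d g).2
end FLemmas

section Quad
variable (F : NilCat.{u} ⥤ NilCat.{v}) [PreservesFiniteCoproducts F]

lemma quad₁ (hF0 : Subsingleton (F.obj NilCat.triv).obj) (X₁ X₂ Y : NilCat.{u}) :
    Set.BijOn
      (fun g => (NilCat.app (F.map (coprod.map (NilCat.retr₁ X₁ X₂) (𝟙 Y))) g,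
                 NilCat.app (F.map (coprod.map (NilCat.retr₂ X₁ X₂) (𝟙 Y))) g))
      (crossEffectSet F (X₁ ⨿ X₂) Y)
      ((crossEffectSet F X₁ Y) ×ˢ (crossEffectSet F X₂ Y)) := by
  have hκ₁m₁ : coprod.map (coprod.inl : X₁ ⟶ X₁ ⨿ X₂) (𝟙 Y)
      ≫ coprod.map (NilCat.retr₁ X₁ X₂) (𝟙 Y) = 𝟙 (X₁ ⨿ Y) := by
    rw [coprod.map_map, NilCat.inl_retr₁, Category.id_comp, coprod.map_id_id]
  have hκ₂m₂ : coprod.map (coprod.inr : X₂ ⟶ X₁ ⨿ X₂) (𝟙 Y)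
      ≫ coprod.map (NilCat.retr₂ X₁ X₂) (𝟙 Y) = 𝟙 (X₂ ⨿ Y) := by
    rw [coprod.map_map, NilCat.inr_retr₂, Category.id_comp, coprod.map_id_id]
  have hd2 : (coprod.inr : Y ⟶ X₁ ⨿ Y)
      ≫ coprod.map (coprod.inl : X₁ ⟶ X₁ ⨿ X₂) (𝟙 Y) = coprod.inr := by
    rw [coprod.inr_map, Category.id_comp]
  have hd4 : (coprod.inr : Y ⟶ X₂ ⨿ Y)
      ≫ coprod.map (coprod.inr : X₂ ⟶ X₁ ⨿ X₂) (𝟙 Y) = coprod.inr := by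
    rw [coprod.inr_map, Category.id_comp]
  have he2 : (coprod.inr : Y ⟶ (X₁ ⨿ X₂) ⨿ Y)
      ≫ coprod.map (NilCat.retr₁ X₁ X₂) (𝟙 Y) = coprod.inr := by
    rw [coprod.inr_map, Category.id_comp]
  have he4 : (coprod.inr : Y ⟶ (X₁ ⨿ X₂) ⨿ Y)
      ≫ coprod.map (NilCat.retr₂ X₁ X₂) (𝟙 Y) = coprod.inr := by
    rw [coprod.inr_map, Category.id_comp]
  exact master_bij
    (F.obj ((X₁ ⨿ X₂) ⨿ Y)).property (F.obj (X₁ ⨿ Y)).property (F.obj (X₂ ⨿ Y)).property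
    (NilCat.mh (F.map (coprod.inl : (X₁ ⨿ X₂) ⟶ (X₁ ⨿ X₂) ⨿ Y)))
    (NilCat.mh (F.map (coprod.inr : Y ⟶ (X₁ ⨿ X₂) ⨿ Y)))
    (NilCat.mh (F.map (NilCat.retr₁ (X₁ ⨿ X₂) Y)))
    (NilCat.mh (F.map (NilCat.retr₂ (X₁ ⨿ X₂) Y)))
    (NilCat.mh (F.map (coprod.inl : X₁ ⟶ X₁ ⨿ X₂)))
    (NilCat.mh (F.map (coprod.inr : X₂ ⟶ X₁ ⨿ X₂)))
    (NilCat.mh (F.map (NilCat.retr₁ X₁ X₂)))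
    (NilCat.mh (F.map (NilCat.retr₂ X₁ X₂)))
    (NilCat.mh (F.map (coprod.inl : X₁ ⟶ X₁ ⨿ Y)))
    (NilCat.mh (F.map (coprod.inr : Y ⟶ X₁ ⨿ Y)))
    (NilCat.mh (F.map (NilCat.retr₁ X₁ Y)))
    (NilCat.mh (F.map (NilCat.retr₂ X₁ Y)))
    (NilCat.mh (F.map (coprod.inl : X₂ ⟶ X₂ ⨿ Y)))
    (NilCat.mh (F.map (coprod.inr : Y ⟶ X₂ ⨿ Y)))
    (NilCat.mh (F.map (NilCat.retr₁ X₂ Y)))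
    (NilCat.mh (F.map (NilCat.retr₂ X₂ Y)))
    (NilCat.mh (F.map (coprod.map (NilCat.retr₁ X₁ X₂) (𝟙 Y))))
    (NilCat.mh (F.map (coprod.map (NilCat.retr₂ X₁ X₂) (𝟙 Y))))
    (NilCat.mh (F.map (coprod.map (coprod.inl : X₁ ⟶ X₁ ⨿ X₂) (𝟙 Y))))
    (NilCat.mh (F.map (coprod.map (coprod.inr : X₂ ⟶ X₁ ⨿ X₂) (𝟙 Y))))
    -- retraction identities on G, G₁, G₂
    (pwF_id F (NilCat.inl_retr₁ _ _)) (pwF_id F (NilCat.inr_retr₂ _ _))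
    (pwF_zero F hF0 (NilCat.inr_retr₁ _ _)) (pwF_zero F hF0 (NilCat.inl_retr₂ _ _))
    (pwF_id F (NilCat.inl_retr₁ _ _)) (pwF_id F (NilCat.inr_retr₂ _ _))
    (pwF_zero F hF0 (NilCat.inr_retr₁ _ _)) (pwF_zero F hF0 (NilCat.inl_retr₂ _ _))
    (pwF_id F (NilCat.inl_retr₁ _ _)) (pwF_id F (NilCat.inr_retr₂ _ _))
    (pwF_zero F hF0 (NilCat.inr_retr₁ _ _)) (pwF_zero F hF0 (NilCat.inl_retr₂ _ _))
    -- retraction identities on A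
    (pwF_id F (NilCat.inl_retr₁ _ _)) (pwF_id F (NilCat.inr_retr₂ _ _))
    (pwF_zero F hF0 (NilCat.inr_retr₁ _ _)) (pwF_zero F hF0 (NilCat.inl_retr₂ _ _))
    -- generation
    (gen_top F _ _) (gen_top F _ _) (gen_top F _ _) (gen_top F _ _)
    -- w
    (pwF_eq2 F (NilCat.mapl_retr₁ (NilCat.retr₁ X₁ X₂)))
    (pwF_eq F (NilCat.mapl_retr₂ (NilCat.retr₁ X₁ X₂)))
    (pwF_eq2 F (NilCat.mapl_retr₁ (NilCat.retr₂ X₁ X₂)))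
    (pwF_eq F (NilCat.mapl_retr₂ (NilCat.retr₂ X₁ X₂)))
    -- s
    (pwF_id F hκ₁m₁) (pwF_id F hκ₂m₂)
    (pwF_eq2 F (NilCat.mapl_retr₁ (coprod.inl : X₁ ⟶ X₁ ⨿ X₂)))
    (pwF_eq F (NilCat.mapl_retr₂ (coprod.inl : X₁ ⟶ X₁ ⨿ X₂)))
    (pwF_eq2 F (NilCat.mapl_retr₁ (coprod.inr : X₂ ⟶ X₁ ⨿ X₂)))
    (pwF_eq F (NilCat.mapl_retr₂ (coprod.inr : X₂ ⟶ X₁ ⨿ X₂)))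
    -- e
    (pwF_eq2 F (coprod.inl_map (NilCat.retr₁ X₁ X₂) (𝟙 Y)))
    (pwF_eq F he2)
    (pwF_eq2 F (coprod.inl_map (NilCat.retr₂ X₁ X₂) (𝟙 Y)))
    (pwF_eq F he4)
    -- d
    (pwF_eq2 F (coprod.inl_map (coprod.inl : X₁ ⟶ X₁ ⨿ X₂) (𝟙 Y)))
    (pwF_eq F hd2)
    (pwF_eq2 F (coprod.inl_map (coprod.inr : X₂ ⟶ X₁ ⨿ X₂) (𝟙 Y)))
    (pwF_eq F hd4)

lemma quad₂ (hF0 : Subsingleton (F.obj NilCat.triv).obj) (X Y₁ Y₂ : NilCat.{u}) :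
    Set.BijOn
      (fun g => (NilCat.app (F.map (coprod.map (𝟙 X) (NilCat.retr₁ Y₁ Y₂))) g,
                 NilCat.app (F.map (coprod.map (𝟙 X) (NilCat.retr₂ Y₁ Y₂))) g))
      (crossEffectSet F X (Y₁ ⨿ Y₂))
      ((crossEffectSet F X Y₁) ×ˢ (crossEffectSet F X Y₂)) := by
  have hκ₁m₁ : coprod.map (𝟙 X) (coprod.inl : Y₁ ⟶ Y₁ ⨿ Y₂)
      ≫ coprod.map (𝟙 X) (NilCat.retr₁ Y₁ Y₂) = 𝟙 (X ⨿ Y₁) := by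
    rw [coprod.map_map, NilCat.inl_retr₁, Category.id_comp, coprod.map_id_id]
  have hκ₂m₂ : coprod.map (𝟙 X) (coprod.inr : Y₂ ⟶ Y₁ ⨿ Y₂)
      ≫ coprod.map (𝟙 X) (NilCat.retr₂ Y₁ Y₂) = 𝟙 (X ⨿ Y₂) := by
    rw [coprod.map_map, NilCat.inr_retr₂, Category.id_comp, coprod.map_id_id]
  have hd2 : (coprod.inl : X ⟶ X ⨿ Y₁)
      ≫ coprod.map (𝟙 X) (coprod.inl : Y₁ ⟶ Y₁ ⨿ Y₂) = coprod.inl := by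
    rw [coprod.inl_map, Category.id_comp]
  have hd4 : (coprod.inl : X ⟶ X ⨿ Y₂)
      ≫ coprod.map (𝟙 X) (coprod.inr : Y₂ ⟶ Y₁ ⨿ Y₂) = coprod.inl := by
    rw [coprod.inl_map, Category.id_comp]
  have he2 : (coprod.inl : X ⟶ X ⨿ (Y₁ ⨿ Y₂))
      ≫ coprod.map (𝟙 X) (NilCat.retr₁ Y₁ Y₂) = coprod.inl := by
    rw [coprod.inl_map, Category.id_comp]
  have he4 : (coprod.inl : X ⟶ X ⨿ (Y₁ ⨿ Y₂))
      ≫ coprod.map (𝟙 X) (NilCat.retr₂ Y₁ Y₂) = coprod.inl := by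
    rw [coprod.inl_map, Category.id_comp]
  have hset : ∀ (U V : NilCat.{u}), crossEffectSet F U V
      = {g | NilCat.app (F.map (NilCat.retr₂ U V)) g = 1 ∧
             NilCat.app (F.map (NilCat.retr₁ U V)) g = 1} :=
    fun U V => Set.ext fun g => and_comm
  rw [hset X (Y₁ ⨿ Y₂), hset X Y₁, hset X Y₂]
  exact master_bij
    (F.obj (X ⨿ (Y₁ ⨿ Y₂))).property (F.obj (X ⨿ Y₁)).property (F.obj (X ⨿ Y₂)).property
    (NilCat.mh (F.map (coprod.inr : (Y₁ ⨿ Y₂) ⟶ X ⨿ (Y₁ ⨿ Y₂))))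
    (NilCat.mh (F.map (coprod.inl : X ⟶ X ⨿ (Y₁ ⨿ Y₂))))
    (NilCat.mh (F.map (NilCat.retr₂ X (Y₁ ⨿ Y₂))))
    (NilCat.mh (F.map (NilCat.retr₁ X (Y₁ ⨿ Y₂))))
    (NilCat.mh (F.map (coprod.inl : Y₁ ⟶ Y₁ ⨿ Y₂)))
    (NilCat.mh (F.map (coprod.inr : Y₂ ⟶ Y₁ ⨿ Y₂)))
    (NilCat.mh (F.map (NilCat.retr₁ Y₁ Y₂)))
    (NilCat.mh (F.map (NilCat.retr₂ Y₁ Y₂)))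
    (NilCat.mh (F.map (coprod.inr : Y₁ ⟶ X ⨿ Y₁)))
    (NilCat.mh (F.map (coprod.inl : X ⟶ X ⨿ Y₁)))
    (NilCat.mh (F.map (NilCat.retr₂ X Y₁)))
    (NilCat.mh (F.map (NilCat.retr₁ X Y₁)))
    (NilCat.mh (F.map (coprod.inr : Y₂ ⟶ X ⨿ Y₂)))
    (NilCat.mh (F.map (coprod.inl : X ⟶ X ⨿ Y₂)))
    (NilCat.mh (F.map (NilCat.retr₂ X Y₂)))
    (NilCat.mh (F.map (NilCat.retr₁ X Y₂)))
    (NilCat.mh (F.map (coprod.map (𝟙 X) (NilCat.retr₁ Y₁ Y₂))))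
    (NilCat.mh (F.map (coprod.map (𝟙 X) (NilCat.retr₂ Y₁ Y₂))))
    (NilCat.mh (F.map (coprod.map (𝟙 X) (coprod.inl : Y₁ ⟶ Y₁ ⨿ Y₂))))
    (NilCat.mh (F.map (coprod.map (𝟙 X) (coprod.inr : Y₂ ⟶ Y₁ ⨿ Y₂))))
    -- retraction identities on G, G₁, G₂
    (pwF_id F (NilCat.inr_retr₂ _ _)) (pwF_id F (NilCat.inl_retr₁ _ _))
    (pwF_zero F hF0 (NilCat.inl_retr₂ _ _)) (pwF_zero F hF0 (NilCat.inr_retr₁ _ _))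
    (pwF_id F (NilCat.inr_retr₂ _ _)) (pwF_id F (NilCat.inl_retr₁ _ _))
    (pwF_zero F hF0 (NilCat.inl_retr₂ _ _)) (pwF_zero F hF0 (NilCat.inr_retr₁ _ _))
    (pwF_id F (NilCat.inr_retr₂ _ _)) (pwF_id F (NilCat.inl_retr₁ _ _))
    (pwF_zero F hF0 (NilCat.inl_retr₂ _ _)) (pwF_zero F hF0 (NilCat.inr_retr₁ _ _))
    -- retraction identities on A
    (pwF_id F (NilCat.inl_retr₁ _ _)) (pwF_id F (NilCat.inr_retr₂ _ _))
    (pwF_zero F hF0 (NilCat.inr_retr₁ _ _)) (pwF_zero F hF0 (NilCat.inl_retr₂ _ _))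
    -- generation
    (by rw [Set.union_comm]; exact gen_top F X (Y₁ ⨿ Y₂))
    (gen_top F Y₁ Y₂)
    (by rw [Set.union_comm]; exact gen_top F X Y₁)
    (by rw [Set.union_comm]; exact gen_top F X Y₂)
    -- w
    (pwF_eq2 F (NilCat.mapr_retr₂ (NilCat.retr₁ Y₁ Y₂)))
    (pwF_eq F (NilCat.mapr_retr₁ (NilCat.retr₁ Y₁ Y₂)))
    (pwF_eq2 F (NilCat.mapr_retr₂ (NilCat.retr₂ Y₁ Y₂)))
    (pwF_eq F (NilCat.mapr_retr₁ (NilCat.retr₂ Y₁ Y₂)))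
    -- s
    (pwF_id F hκ₁m₁) (pwF_id F hκ₂m₂)
    (pwF_eq2 F (NilCat.mapr_retr₂ (coprod.inl : Y₁ ⟶ Y₁ ⨿ Y₂)))
    (pwF_eq F (NilCat.mapr_retr₁ (coprod.inl : Y₁ ⟶ Y₁ ⨿ Y₂)))
    (pwF_eq2 F (NilCat.mapr_retr₂ (coprod.inr : Y₂ ⟶ Y₁ ⨿ Y₂)))
    (pwF_eq F (NilCat.mapr_retr₁ (coprod.inr : Y₂ ⟶ Y₁ ⨿ Y₂)))
    -- e
    (pwF_eq2 F (coprod.inr_map (𝟙 X) (NilCat.retr₁ Y₁ Y₂)))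
    (pwF_eq F he2)
    (pwF_eq2 F (coprod.inr_map (𝟙 X) (NilCat.retr₂ Y₁ Y₂)))
    (pwF_eq F he4)
    -- d
    (pwF_eq2 F (coprod.inr_map (𝟙 X) (coprod.inl : Y₁ ⟶ Y₁ ⨿ Y₂)))
    (pwF_eq F hd2)
    (pwF_eq2 F (coprod.inr_map (𝟙 X) (coprod.inr : Y₂ ⟶ Y₁ ⨿ Y₂)))
    (pwF_eq F hd4)
end Quad

/-- If `F : Nil → Nil` preserves finite coproducts and `F(0) = 0`, then `F` is quadratic:
its second cross-effect `F(X|Y) = Ker(F(X ∨ Y) → F(X) × F(Y))` is linear (additive) in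
each variable, i.e. the canonical comparison maps
`F(X₁ ∨ X₂ | Y) → F(X₁|Y) × F(X₂|Y)` and `F(X | Y₁ ∨ Y₂) → F(X|Y₁) × F(X|Y₂)`
are bijections. -/
theorem nilCat_coproductPreserving_is_quadratic
    (F : NilCat ⥤ NilCat) [PreservesFiniteCoproducts F]
    (hF0 : Subsingleton (F.obj NilCat.triv).obj) :
    (∀ X₁ X₂ Y : NilCat,
      Set.BijOn
        (fun g => (NilCat.app (F.map (coprod.map (NilCat.retr₁ X₁ X₂) (𝟙 Y))) g,
                   NilCat.app (F.map (coprod.map (NilCat.retr₂ X₁ X₂) (𝟙 Y))) g))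
        (crossEffectSet F (X₁ ⨿ X₂) Y)
        ((crossEffectSet F X₁ Y) ×ˢ (crossEffectSet F X₂ Y))) ∧
    (∀ X Y₁ Y₂ : NilCat,
      Set.BijOn
        (fun g => (NilCat.app (F.map (coprod.map (𝟙 X) (NilCat.retr₁ Y₁ Y₂))) g,
                   NilCat.app (F.map (coprod.map (𝟙 X) (NilCat.retr₂ Y₁ Y₂))) g))
        (crossEffectSet F X (Y₁ ⨿ Y₂))
        ((crossEffectSet F X Y₁) ×ˢ (crossEffectSet F X Y₂))) :=
  ⟨fun X₁ X₂ Y => quad₁ F hF0 X₁ X₂ Y, fun X Y₁ Y₂ => quad₂ F hF0 X Y₁ Y₂⟩
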